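/- Let X_1 → X_2 → ... → X_t and X_1 → X_2' → ... → X_{t−1}' → X_t be two different (r,h)-paths from X_1 to X_t. If A is a set of k integers with |h^{(r)}A| = L(r,h), then φ_A(X_i) = φ_A(X_i') for i = 2,...,t−1, where φ_A(X) = Σ x_j a_j. -/

import Mathlib

open Finset

/-- A step `U → W`: some coordinate `j` decreases by 1 and coordinate `j+1` increases by 1. -/
def IsStep (k : ℕ) (U W : ℕ → ℕ) : Prop :=
  ∃ j, j + 1 < k ∧ U j = W j + 1 ∧ W (j + 1) = U (j + 1) + 1 ∧
    ∀ i, i ≠ j → i ≠ j + 1 → W i = U i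

/-- Membership in `R(r,h)`: a `k`-tuple of nonnegative integers with `x i ≤ r i` and `∑ x i = h`. -/
def InR (k : ℕ) (r : ℕ → ℕ) (h : ℕ) (x : ℕ → ℕ) : Prop :=
  (∀ i < k, x i ≤ r i) ∧ (∀ i, k ≤ i → x i = 0) ∧ ∑ i ∈ Finset.range k, x i = h

/-- The general `h`-fold sumset `h^{(r)}A` for `A = {a 0 < a 1 < ⋯ < a (k-1)}`. -/
def genSumset (k : ℕ) (a : ℕ → ℤ) (r : ℕ → ℕ) (h : ℕ) : Set ℤ :=
  {z | ∃ s : ℕ → ℕ, (∀ i < k, s i ≤ r i) ∧ (∑ i ∈ Finset.range k, s i = h) ∧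
    z = ∑ i ∈ Finset.range k, (s i : ℤ) * a i}

/-- The quantity `L(r,h)` in terms of `I`, `M`, `δ`, `θ`. -/
def Lval (k I M : ℕ) (r : ℕ → ℕ) (δ θ : ℕ) : ℤ :=
  (∑ j ∈ Finset.Ico (M + 1) k, (j : ℤ) * r j) - (∑ j ∈ Finset.range I, (j : ℤ) * r j)
    + (M : ℤ) * θ - (I : ℤ) * δ + 1

/-- The weighted sum `S(X) = ∑ j·x j`. -/
def Sw (k : ℕ) (x : ℕ → ℕ) : ℤ := ∑ j ∈ Finset.range k, (j : ℤ) * x j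

/-- An `(r,h)`-path of length `t`: `P 1 → P 2 → ⋯ → P t`, all in `R(r,h)`. -/
def IsPath (k : ℕ) (r : ℕ → ℕ) (h t : ℕ) (P : ℕ → ℕ → ℕ) : Prop :=
  (∀ i, 1 ≤ i → i ≤ t → InR k r h (P i)) ∧
  (∀ i, 1 ≤ i → i < t → IsStep k (P i) (P (i + 1)))

lemma step_diff (k : ℕ) (U W : ℕ → ℕ) (c : ℕ → ℤ) (hs : IsStep k U W) :
    ∃ j, j + 1 < k ∧ (∑ i ∈ Finset.range k, c i * (W i : ℤ))
      = (∑ i ∈ Finset.range k, c i * (U i : ℤ)) + c (j+1) - c j := by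
  obtain ⟨j, hj, h1, h2, h3⟩ := hs
  refine ⟨j, hj, ?_⟩
  have hsub : ({j, j+1} : Finset ℕ) ⊆ Finset.range k := by
    intro i hi; simp only [mem_insert, mem_singleton] at hi
    rcases hi with rfl | rfl <;> simp [Finset.mem_range] <;> omega
  have key : ∑ i ∈ Finset.range k, (c i * (W i : ℤ) - c i * (U i : ℤ))
      = c (j+1) - c j := by
    rw [← Finset.sum_subset hsub]
    · rw [Finset.sum_pair (by omega : j ≠ j + 1)]
      have e1 : (U j : ℤ) = (W j : ℤ) + 1 := by exact_mod_cast congrArg (Nat.cast (R := ℤ)) h1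
      have e2 : (W (j+1) : ℤ) = (U (j+1) : ℤ) + 1 := by exact_mod_cast congrArg (Nat.cast (R := ℤ)) h2
      rw [e1, e2]; ring
    · intro i _ hi
      simp only [mem_insert, mem_singleton] at hi
      push_neg at hi
      rw [h3 i hi.1 hi.2]; ring
  have := Finset.sum_sub_distrib (s := Finset.range k)
    (f := fun i => c i * (W i : ℤ)) (g := fun i => c i * (U i : ℤ))
  rw [this] at key
  linarith

lemma step_Sw (k : ℕ) (U W : ℕ → ℕ) (hs : IsStep k U W) : Sw k W = Sw k U + 1 := by
  obtain ⟨j, _, hd⟩ := step_diff k U W (fun i => (i : ℤ)) hs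
  unfold Sw
  rw [hd]; push_cast; ring

lemma step_phi (k : ℕ) (a : ℕ → ℤ) (ha : ∀ i j, i < j → j < k → a i < a j)
    (U W : ℕ → ℕ) (hs : IsStep k U W) :
    ∑ i ∈ Finset.range k, (U i : ℤ) * a i < ∑ i ∈ Finset.range k, (W i : ℤ) * a i := by
  obtain ⟨j, hj, hd⟩ := step_diff k U W a hs
  have comm : ∀ y : ℕ → ℕ, ∑ i ∈ Finset.range k, (y i : ℤ) * a i
      = ∑ i ∈ Finset.range k, a i * (y i : ℤ) := by
    intro y; exact Finset.sum_congr rfl (fun i _ => mul_comm _ _)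
  rw [comm U, comm W, hd]
  have := ha j (j+1) (by omega) hj
  linarith

lemma Sw_nonneg (k : ℕ) (x : ℕ → ℕ) : 0 ≤ Sw k x :=
  Finset.sum_nonneg (fun i _ => by positivity)

lemma Sw_le (k h : ℕ) (r : ℕ → ℕ) (x : ℕ → ℕ) (hx : InR k r h x) :
    Sw k x ≤ ∑ j ∈ Finset.range k, (j : ℤ) * r j := by
  apply Finset.sum_le_sum
  intro i hi
  have := hx.1 i (Finset.mem_range.mp hi)
  have : (x i : ℤ) ≤ r i := by exact_mod_cast this
  nlinarith [Int.ofNat_nonneg i]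

lemma sum_pair_split (k j : ℕ) (hj : j + 1 < k) (y : ℕ → ℕ) :
    ∑ i ∈ Finset.range k, y i
      = y j + y (j+1) + ∑ i ∈ ((Finset.range k).erase j).erase (j+1), y i := by
  have h1 : j ∈ Finset.range k := Finset.mem_range.mpr (by omega)
  have h2 : j + 1 ∈ (Finset.range k).erase j := by
    rw [Finset.mem_erase]; exact ⟨by omega, Finset.mem_range.mpr hj⟩
  rw [← Finset.add_sum_erase _ _ h1, ← Finset.add_sum_erase _ _ h2]
  ring

lemma Sw_noback (k h I δ : ℕ) (r : ℕ → ℕ)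
    (hr : ∀ j < k, 0 < r j)
    (hIk : I ≤ k)
    (hI1 : ∑ j ∈ Finset.range I, r j ≤ h)
    (hI2 : ∀ I' ≤ k, (∑ j ∈ Finset.range I', r j ≤ h) → I' ≤ I)
    (hδ : (δ : ℤ) = (h : ℤ) - ∑ j ∈ Finset.range I, (r j : ℤ))
    (hh : 1 ≤ h)
    (x : ℕ → ℕ) (hx : InR k r h x)
    (hnb : ¬ ∃ j, j + 1 < k ∧ 1 ≤ x (j+1) ∧ x j < r j) :
    Sw k x = (∑ j ∈ Finset.range I, (j : ℤ) * r j) + I * δ := by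
  push_neg at hnb
  obtain ⟨hxr, hx0, hsum⟩ := hx
  -- support nonempty
  have hsup : ((Finset.range k).filter (fun j => x j ≠ 0)).Nonempty := by
    by_contra hc
    rw [Finset.not_nonempty_iff_eq_empty, Finset.filter_eq_empty_iff] at hc
    have : ∑ i ∈ Finset.range k, x i = 0 := Finset.sum_eq_zero (by
      intro i hi; have := hc hi; simpa using this)
    omega
  set m := ((Finset.range k).filter (fun j => x j ≠ 0)).max' hsup with hm
  have hmmem := ((Finset.range k).filter (fun j => x j ≠ 0)).max'_mem hsup
  rw [Finset.mem_filter, Finset.mem_range, ← hm] at hmmem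
  obtain ⟨hmk, hxm⟩ := hmmem
  have hmax : ∀ j, m < j → x j = 0 := by
    intro j hj
    by_cases hjk : j < k
    · by_contra hne
      have : j ≤ m := Finset.le_max' _ j (by rw [Finset.mem_filter, Finset.mem_range]; exact ⟨hjk, hne⟩)
      omega
    · exact hx0 j (by omega)
  clear hm
  clear_value m
  -- below m everything is full
  have claim1 : ∀ d, d ≤ m → (x (m - d) ≠ 0 ∧ ∀ j, m - d ≤ j → j < m → x j = r j) := by
    intro d
    induction d with
    | zero => intro _; exact ⟨by simpa using hxm, by intro j h1 h2; omega⟩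
    | succ d ih =>
      intro hd
      obtain ⟨h1, _h2⟩ := ih (by omega)
      have hkey : x (m - (d+1)) = r (m - (d+1)) := by
        have hlt : (m - (d+1)) + 1 < k := by omega
        have heq : (m - (d+1)) + 1 = m - d := by omega
        have := hnb (m - (d+1)) hlt (by rw [heq]; omega)
        have := hxr (m - (d+1)) (by omega)
        omega
      refine ⟨by rw [hkey]; exact (hr _ (by omega)).ne', ?_⟩
      intro j hj1 hj2
      rcases Nat.eq_or_lt_of_le hj1 with heq | hlt
      · rw [← heq]; exact hkey
      · exact (ih (by omega)).2 j (by omega) hj2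
  have claim : ∀ j, j < m → x j = r j := by
    intro j hj
    exact (claim1 m le_rfl).2 j (by omega) hj
  -- sum decomposition
  have hsplit : ∑ i ∈ Finset.range (m+1), x i + ∑ i ∈ Finset.Ico (m+1) k, x i = h := by
    rw [Finset.sum_range_add_sum_Ico _ (by omega : m + 1 ≤ k)]; exact hsum
  have hIco0 : ∑ i ∈ Finset.Ico (m+1) k, x i = 0 :=
    Finset.sum_eq_zero (fun i hi => hmax i (by rw [Finset.mem_Ico] at hi; omega))
  have hrangem : ∑ i ∈ Finset.range m, x i = ∑ i ∈ Finset.range m, r i :=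
    Finset.sum_congr rfl (fun i hi => claim i (Finset.mem_range.mp hi))
  have hxmval : ∑ i ∈ Finset.range m, r i + x m = h := by
    have := Finset.sum_range_succ x m
    omega
  have hmI : m ≤ I := hI2 m (by omega) (by omega)
  -- Sw computation
  have hSw : Sw k x = (∑ j ∈ Finset.range m, (j : ℤ) * r j) + m * x m := by
    have hz : ∑ i ∈ Finset.Ico (m+1) k, (i : ℤ) * x i = 0 :=
      Finset.sum_eq_zero (fun i hi => by
        rw [hmax i (by rw [Finset.mem_Ico] at hi; omega)]; ring)
    unfold Sw
    rw [← Finset.sum_range_add_sum_Ico _ (by omega : m + 1 ≤ k), hz, add_zero,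
      Finset.sum_range_succ]
    congr 1
    exact Finset.sum_congr rfl (fun i hi => by rw [claim i (Finset.mem_range.mp hi)])
  have hcastI : ((∑ j ∈ Finset.range I, r j : ℕ) : ℤ) = ∑ j ∈ Finset.range I, (r j : ℤ) := by
    push_cast; rfl
  rcases Nat.eq_or_lt_of_le hmI with heq | hlt
  · -- m = I
    rw [hSw, ← heq]
    have hxd : (x m : ℤ) = δ := by
      rw [hδ, ← hcastI, ← heq]
      omega
    rw [hxd]
  · -- m < I : show I = m + 1, r sums collapse
    have hb1 : h ≤ ∑ j ∈ Finset.range (m+1), r j := by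
      have := hxr m hmk
      rw [Finset.sum_range_succ]
      omega
    have hb2 : ∑ j ∈ Finset.range (m+1), r j ≤ ∑ j ∈ Finset.range I, r j :=
      Finset.sum_le_sum_of_subset (Finset.range_subset_range.mpr (by omega))
    have hIm1 : I = m + 1 := by
      by_contra hne
      have hm2 : m + 2 ≤ I := by omega
      have hb3 : ∑ j ∈ Finset.range (m+2), r j ≤ ∑ j ∈ Finset.range I, r j :=
        Finset.sum_le_sum_of_subset (Finset.range_subset_range.mpr hm2)
      have : ∑ j ∈ Finset.range (m+2), r j = ∑ j ∈ Finset.range (m+1), r j + r (m+1) :=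
        Finset.sum_range_succ r (m+1)
      have hrm1 : 0 < r (m+1) := hr (m+1) (by omega)
      omega
    subst hIm1
    have hsumI : ∑ j ∈ Finset.range (m+1), r j = h := by omega
    have hδ0 : (δ : ℤ) = 0 := by rw [hδ, ← hcastI]; omega
    have hxmrm : x m = r m := by
      have := Finset.sum_range_succ r m
      omega
    rw [hSw, hxmrm, Finset.sum_range_succ (fun j => (j:ℤ) * r j) m, hδ0]
    push_cast
    ring

lemma Sw_nofwd (k h M θ : ℕ) (r : ℕ → ℕ)
    (hr : ∀ j < k, 0 < r j)
    (hM1 : ∑ j ∈ Finset.Ico (M + 1) k, r j ≤ h)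
    (hM2 : ∀ M', (∑ j ∈ Finset.Ico (M' + 1) k, r j ≤ h) → M ≤ M')
    (hθ : (θ : ℤ) = (h : ℤ) - ∑ j ∈ Finset.Ico (M + 1) k, (r j : ℤ))
    (hh : 1 ≤ h)
    (x : ℕ → ℕ) (hx : InR k r h x)
    (hnf : ¬ ∃ j, j + 1 < k ∧ 1 ≤ x j ∧ x (j+1) < r (j+1)) :
    Sw k x = (∑ j ∈ Finset.Ico (M + 1) k, (j : ℤ) * r j) + M * θ := by
  push_neg at hnf
  obtain ⟨hxr, hx0, hsum⟩ := hx
  have hsup : ((Finset.range k).filter (fun j => x j ≠ 0)).Nonempty := by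
    by_contra hc
    rw [Finset.not_nonempty_iff_eq_empty, Finset.filter_eq_empty_iff] at hc
    have : ∑ i ∈ Finset.range k, x i = 0 := Finset.sum_eq_zero (by
      intro i hi; have := hc hi; simpa using this)
    omega
  set m := ((Finset.range k).filter (fun j => x j ≠ 0)).min' hsup with hm
  have hmmem := ((Finset.range k).filter (fun j => x j ≠ 0)).min'_mem hsup
  rw [Finset.mem_filter, Finset.mem_range, ← hm] at hmmem
  obtain ⟨hmk, hxm⟩ := hmmem
  have hmin : ∀ j, j < m → x j = 0 := by
    intro j hj
    by_contra hne
    have hjk : j < k := by omega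
    have : m ≤ j := Finset.min'_le _ j (by rw [Finset.mem_filter, Finset.mem_range]; exact ⟨hjk, hne⟩)
    omega
  clear hm
  clear_value m
  -- above m everything is full
  have claim1 : ∀ d, m + d < k → (x (m + d) ≠ 0 ∧ (1 ≤ d → x (m + d) = r (m + d))) := by
    intro d
    induction d with
    | zero => intro _; exact ⟨hxm, by omega⟩
    | succ d ih =>
      intro hd
      obtain ⟨h1, _⟩ := ih (by omega)
      have hkey : x (m + (d+1)) = r (m + (d+1)) := by
        have t1 := hnf (m + d) (by omega) (by omega)
        have t2 := hxr (m + (d+1)) hd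
        have e1 : x (m + d + 1) = x (m + (d+1)) := rfl
        have e2 : r (m + d + 1) = r (m + (d+1)) := rfl
        omega
      exact ⟨by rw [hkey]; exact (hr _ hd).ne', fun _ => hkey⟩
  have claim : ∀ j, m < j → j < k → x j = r j := by
    intro j h1 h2
    have := (claim1 (j - m) (by omega)).2 (by omega)
    rwa [show m + (j - m) = j by omega] at this
  -- sum decomposition
  have hsplit : ∑ i ∈ Finset.range (m+1), x i + ∑ i ∈ Finset.Ico (m+1) k, x i = h := by
    rw [Finset.sum_range_add_sum_Ico _ (by omega : m + 1 ≤ k)]; exact hsum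
  have hrange0 : ∑ i ∈ Finset.range m, x i = 0 :=
    Finset.sum_eq_zero (fun i hi => hmin i (Finset.mem_range.mp hi))
  have hIcor : ∑ i ∈ Finset.Ico (m+1) k, x i = ∑ i ∈ Finset.Ico (m+1) k, r i :=
    Finset.sum_congr rfl (fun i hi => by
      rw [Finset.mem_Ico] at hi; exact claim i (by omega) hi.2)
  have hxmval : x m + ∑ i ∈ Finset.Ico (m+1) k, r i = h := by
    have := Finset.sum_range_succ x m
    omega
  have hmM : M ≤ m := hM2 m (by omega)
  have hfull : h ≤ ∑ i ∈ Finset.Ico m k, r i := by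
    have := hxr m hmk
    rw [Finset.sum_eq_sum_Ico_succ_bot (by omega : m < k)]
    omega
  have hSw : Sw k x = (m : ℤ) * x m + ∑ j ∈ Finset.Ico (m+1) k, (j : ℤ) * r j := by
    have hz : ∑ i ∈ Finset.range m, (i : ℤ) * x i = 0 :=
      Finset.sum_eq_zero (fun i hi => by rw [hmin i (Finset.mem_range.mp hi)]; ring)
    unfold Sw
    rw [← Finset.sum_range_add_sum_Ico _ (by omega : m + 1 ≤ k), Finset.sum_range_succ, hz,
      zero_add]
    congr 1
    exact Finset.sum_congr rfl (fun i hi => by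
      rw [Finset.mem_Ico] at hi; rw [claim i (by omega) hi.2])
  have hcastM : ((∑ j ∈ Finset.Ico (M+1) k, r j : ℕ) : ℤ) = ∑ j ∈ Finset.Ico (M+1) k, (r j : ℤ) := by
    push_cast; rfl
  rcases Nat.eq_or_lt_of_le hmM with heq | hlt
  · rw [hSw, ← heq]
    have hxt : (x M : ℤ) = θ := by
      rw [hθ, ← hcastM, heq]
      omega
    rw [hxt]; ring
  · -- M < m : show m = M + 1
    have hsub : ∑ i ∈ Finset.Ico m k, r i ≤ ∑ j ∈ Finset.Ico (M+1) k, r j :=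
      Finset.sum_le_sum_of_subset (Finset.Ico_subset_Ico (by omega) le_rfl)
    have hm1 : m = M + 1 := by
      by_contra hne
      have hM2m : M + 2 ≤ m := by omega
      have hsub2 : ∑ i ∈ Finset.Ico m k, r i ≤ ∑ j ∈ Finset.Ico (M+2) k, r j :=
        Finset.sum_le_sum_of_subset (Finset.Ico_subset_Ico (by omega) le_rfl)
      have : ∑ j ∈ Finset.Ico (M+1) k, r j = r (M+1) + ∑ j ∈ Finset.Ico (M+2) k, r j :=
        Finset.sum_eq_sum_Ico_succ_bot (by omega : M + 1 < k) r
      have : 0 < r (M+1) := hr (M+1) (by omega)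
      omega
    subst hm1
    have hnorm : Finset.Ico (M+1+1) k = Finset.Ico (M+2) k := rfl
    rw [hnorm] at hxmval hSw
    have hsumeq : ∑ j ∈ Finset.Ico (M+1) k, r j = h := by omega
    have hθ0 : (θ : ℤ) = 0 := by rw [hθ, ← hcastM]; omega
    have hxmrm : x (M+1) = r (M+1) := by
      have : ∑ j ∈ Finset.Ico (M+1) k, r j = r (M+1) + ∑ j ∈ Finset.Ico (M+2) k, r j :=
        Finset.sum_eq_sum_Ico_succ_bot (by omega : M + 1 < k) r
      omega
    rw [hSw, hxmrm, hθ0]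
    rw [Finset.sum_eq_sum_Ico_succ_bot (by omega : M + 1 < k) (fun j => (j:ℤ) * r j)]
    push_cast
    ring

lemma back_move (k h : ℕ) (r : ℕ → ℕ) (x : ℕ → ℕ) (hx : InR k r h x)
    (j : ℕ) (hjk : j + 1 < k) (h1 : 1 ≤ x (j+1)) (h2 : x j < r j) :
    ∃ w, InR k r h w ∧ IsStep k w x := by
  obtain ⟨hxr, hx0, hsum⟩ := hx
  refine ⟨fun i => if i = j then x j + 1 else if i = j + 1 then x (j+1) - 1 else x i, ?_⟩
  set w : ℕ → ℕ := fun i => if i = j then x j + 1 else if i = j + 1 then x (j+1) - 1 else x i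
    with hwdef
  have wj : w j = x j + 1 := by rw [hwdef]; simp
  have wj1 : w (j+1) = x (j+1) - 1 := by
    rw [hwdef]; simp only; rw [if_neg (by omega : ¬ (j + 1 = j))]; simp
  have wi : ∀ i, i ≠ j → i ≠ j + 1 → w i = x i := by
    intro i e1 e2; rw [hwdef]; simp only; rw [if_neg e1, if_neg e2]
  refine ⟨⟨?_, ?_, ?_⟩, ?_⟩
  · intro i hik
    by_cases e1 : i = j
    · subst e1; rw [wj]; omega
    · by_cases e2 : i = j + 1
      · subst e2; rw [wj1]; have := hxr (j+1) hjk; omega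
      · rw [wi i e1 e2]; exact hxr i hik
  · intro i hik
    rw [wi i (by omega) (by omega)]; exact hx0 i hik
  · rw [sum_pair_split k j hjk w, sum_pair_split k j hjk x] at *
    have hrest : ∑ i ∈ ((Finset.range k).erase j).erase (j+1), w i
        = ∑ i ∈ ((Finset.range k).erase j).erase (j+1), x i := by
      apply Finset.sum_congr rfl
      intro i hi
      rw [Finset.mem_erase, Finset.mem_erase] at hi
      exact wi i hi.2.1 hi.1
    rw [hrest, wj, wj1]
    omega
  · exact ⟨j, hjk, by rw [wj], by rw [wj1]; omega, fun i e1 e2 => (wi i e1 e2).symm ▸ rfl⟩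

/-- construct the successor for a forward step -/

lemma fwd_move (k h : ℕ) (r : ℕ → ℕ) (x : ℕ → ℕ) (hx : InR k r h x)
    (j : ℕ) (hjk : j + 1 < k) (h1 : 1 ≤ x j) (h2 : x (j+1) < r (j+1)) :
    ∃ w, InR k r h w ∧ IsStep k x w := by
  obtain ⟨hxr, hx0, hsum⟩ := hx
  refine ⟨fun i => if i = j then x j - 1 else if i = j + 1 then x (j+1) + 1 else x i, ?_⟩
  set w : ℕ → ℕ := fun i => if i = j then x j - 1 else if i = j + 1 then x (j+1) + 1 else x i
    with hwdef
  have wj : w j = x j - 1 := by rw [hwdef]; simp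
  have wj1 : w (j+1) = x (j+1) + 1 := by
    rw [hwdef]; simp only; rw [if_neg (by omega : ¬ (j + 1 = j))]; simp
  have wi : ∀ i, i ≠ j → i ≠ j + 1 → w i = x i := by
    intro i e1 e2; rw [hwdef]; simp only; rw [if_neg e1, if_neg e2]
  refine ⟨⟨?_, ?_, ?_⟩, ?_⟩
  · intro i hik
    by_cases e1 : i = j
    · subst e1; rw [wj]; have := hxr i (by omega); omega
    · by_cases e2 : i = j + 1
      · subst e2; rw [wj1]; omega
      · rw [wi i e1 e2]; exact hxr i hik
  · intro i hik
    rw [wi i (by omega) (by omega)]; exact hx0 i hik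
  · rw [sum_pair_split k j hjk w, sum_pair_split k j hjk x] at *
    have hrest : ∑ i ∈ ((Finset.range k).erase j).erase (j+1), w i
        = ∑ i ∈ ((Finset.range k).erase j).erase (j+1), x i := by
      apply Finset.sum_congr rfl
      intro i hi
      rw [Finset.mem_erase, Finset.mem_erase] at hi
      exact wi i hi.2.1 hi.1
    rw [hrest, wj, wj1]
    omega
  · exact ⟨j, hjk, by rw [wj]; omega, by rw [wj1], fun i e1 e2 => wi i e1 e2⟩

lemma chain_back (k h : ℕ) (r : ℕ → ℕ) (Smin : ℤ)
    (hmin : ∀ x, InR k r h x →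
      ¬ (∃ j, j + 1 < k ∧ 1 ≤ x (j+1) ∧ x j < r j) → Sw k x = Smin) :
    ∀ (fuel : ℕ) (x : ℕ → ℕ), InR k r h x → (Sw k x).toNat ≤ fuel →
    ∃ n, ∃ c : ℕ → ℕ → ℕ, c n = x ∧ (∀ i ≤ n, InR k r h (c i)) ∧
      (∀ i < n, IsStep k (c i) (c (i+1))) ∧ Sw k (c 0) = Smin := by
  intro fuel
  induction fuel with
  | zero =>
    intro x hx hf
    by_cases hb : ∃ j, j + 1 < k ∧ 1 ≤ x (j+1) ∧ x j < r j
    · exfalso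
      obtain ⟨j, hjk, h1, h2⟩ := hb
      obtain ⟨w, hw, hs⟩ := back_move k h r x hx j hjk h1 h2
      have e1 := step_Sw k w x hs
      have e2 := Sw_nonneg k w
      have e3 := Sw_nonneg k x
      omega
    · exact ⟨0, fun _ => x, rfl, fun i _ => hx, fun i hi => absurd hi (by omega), hmin x hx hb⟩
  | succ fuel ih =>
    intro x hx hf
    by_cases hb : ∃ j, j + 1 < k ∧ 1 ≤ x (j+1) ∧ x j < r j
    · obtain ⟨j, hjk, h1, h2⟩ := hb
      obtain ⟨w, hw, hs⟩ := back_move k h r x hx j hjk h1 h2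
      have e1 := step_Sw k w x hs
      have e2 := Sw_nonneg k w
      obtain ⟨n, c, hcn, hcin, hcstep, hc0⟩ := ih w hw (by omega)
      refine ⟨n + 1, fun i => if i = n + 1 then x else c i, by simp, ?_, ?_, ?_⟩
      · intro i hi
        by_cases e : i = n + 1
        · simpa [e] using hx
        · simp only [if_neg e]; exact hcin i (by omega)
      · intro i hi
        by_cases e : i = n
        · simp only
          rw [if_neg (by omega : ¬ (i = n + 1)), if_pos (by omega : i + 1 = n + 1), e, hcn]
          exact hs
        · simp only [if_neg (by omega : ¬ (i = n + 1)), if_neg (by omega : ¬ (i + 1 = n + 1))]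
          exact hcstep i (by omega)
      · simp only [if_neg (by omega : ¬ (0 = n + 1))]
        exact hc0
    · exact ⟨0, fun _ => x, rfl, fun i _ => hx, fun i hi => absurd hi (by omega), hmin x hx hb⟩

lemma chain_fwd (k h : ℕ) (r : ℕ → ℕ) (Smax : ℤ)
    (hmax : ∀ x, InR k r h x →
      ¬ (∃ j, j + 1 < k ∧ 1 ≤ x j ∧ x (j+1) < r (j+1)) → Sw k x = Smax) :
    ∀ (fuel : ℕ) (x : ℕ → ℕ), InR k r h x →
      ((∑ j ∈ Finset.range k, (j : ℤ) * r j) - Sw k x).toNat ≤ fuel →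
    ∃ n, ∃ c : ℕ → ℕ → ℕ, c 0 = x ∧ (∀ i ≤ n, InR k r h (c i)) ∧
      (∀ i < n, IsStep k (c i) (c (i+1))) ∧ Sw k (c n) = Smax := by
  intro fuel
  induction fuel with
  | zero =>
    intro x hx hf
    by_cases hb : ∃ j, j + 1 < k ∧ 1 ≤ x j ∧ x (j+1) < r (j+1)
    · exfalso
      obtain ⟨j, hjk, h1, h2⟩ := hb
      obtain ⟨w, hw, hs⟩ := fwd_move k h r x hx j hjk h1 h2
      have e1 := step_Sw k x w hs
      have e2 := Sw_le k h r w hw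
      omega
    · exact ⟨0, fun _ => x, rfl, fun i _ => hx, fun i hi => absurd hi (by omega), hmax x hx hb⟩
  | succ fuel ih =>
    intro x hx hf
    by_cases hb : ∃ j, j + 1 < k ∧ 1 ≤ x j ∧ x (j+1) < r (j+1)
    · obtain ⟨j, hjk, h1, h2⟩ := hb
      obtain ⟨w, hw, hs⟩ := fwd_move k h r x hx j hjk h1 h2
      have e1 := step_Sw k x w hs
      have e2 := Sw_le k h r w hw
      obtain ⟨n, c, hc0, hcin, hcstep, hcn⟩ := ih w hw (by omega)
      refine ⟨n + 1, fun i => if i = 0 then x else c (i - 1), by simp, ?_, ?_, ?_⟩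
      · intro i hi
        by_cases e : i = 0
        · simpa [e] using hx
        · simp only [if_neg e]; exact hcin (i-1) (by omega)
      · intro i hi
        by_cases e : i = 0
        · subst e
          simp only [if_pos rfl, if_neg (by omega : ¬ ((1:ℕ) = 0))]
          simpa [hc0] using hs
        · simp only [if_neg e, if_neg (by omega : ¬ (i + 1 = 0))]
          rw [show i + 1 - 1 = i - 1 + 1 by omega]
          exact hcstep (i-1) (by omega)
      · simp only [if_neg (by omega : ¬ (n + 1 = 0))]
        simpa using hcn
    · exact ⟨0, fun _ => x, rfl, fun i _ => hx, fun i hi => absurd hi (by omega), hmax x hx hb⟩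

lemma mono_enum_eq (n : ℕ) (f g : ℕ → ℤ)
    (hf : ∀ i j, i < j → j < n → f i < f j)
    (hg : ∀ i j, i < j → j < n → g i < g j)
    (hfg : (Finset.range n).image f = (Finset.range n).image g) :
    ∀ i < n, f i = g i := by
  have key : ∀ (F : ℕ → ℤ), (∀ i j, i < j → j < n → F i < F j) → ∀ i < n,
      (((Finset.range n).image F).filter (fun z => z < F i)).card = i := by
    intro F hF i hi
    have heq : ((Finset.range n).image F).filter (fun z => z < F i)
        = (Finset.range i).image F := by
      ext z
      simp only [Finset.mem_filter, Finset.mem_image, Finset.mem_range]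
      constructor
      · rintro ⟨⟨j, hj, rfl⟩, hlt⟩
        refine ⟨j, ?_, rfl⟩
        by_contra hc
        push_neg at hc
        rcases Nat.eq_or_lt_of_le hc with e | e
        · subst e; exact lt_irrefl _ hlt
        · exact absurd (hF i j e hj) (by omega)
      · rintro ⟨j, hj, rfl⟩
        exact ⟨⟨j, by omega, rfl⟩, hF j i hj hi⟩
    have hinj : Set.InjOn F (Finset.range i) := by
      intro p hp q hq hpq
      simp only [Finset.coe_range, Set.mem_Iio] at hp hq
      by_contra hne
      rcases Nat.lt_or_ge p q with hl | hl
      · exact absurd (hF p q hl (by omega)) (by omega)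
      · have hq2 : q < p := by omega
        exact absurd (hF q p hq2 (by omega)) (by omega)
    rw [heq, Finset.card_image_of_injOn hinj, Finset.card_range]
  intro i hi
  have h1 := key f hf i hi
  have h2 := key g hg i hi
  rw [hfg] at h1
  by_contra hne
  have hfiT : f i ∈ (Finset.range n).image g := by
    rw [← hfg]; exact Finset.mem_image_of_mem _ (Finset.mem_range.2 hi)
  have hgiT : g i ∈ (Finset.range n).image g :=
    Finset.mem_image_of_mem _ (Finset.mem_range.2 hi)
  rcases lt_or_gt_of_ne hne with hlt | hlt
  · have hsub : (((Finset.range n).image g).filter (fun z => z < f i))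
        ⊂ ((Finset.range n).image g).filter (fun z => z < g i) := by
      rw [Finset.ssubset_iff_of_subset]
      · exact ⟨f i, Finset.mem_filter.mpr ⟨hfiT, hlt⟩, fun hc =>
          lt_irrefl _ (Finset.mem_filter.mp hc).2⟩
      · intro z hz
        rw [Finset.mem_filter] at hz ⊢
        exact ⟨hz.1, lt_trans hz.2 hlt⟩
    have := Finset.card_lt_card hsub
    omega
  · have hsub : (((Finset.range n).image g).filter (fun z => z < g i))
        ⊂ ((Finset.range n).image g).filter (fun z => z < f i) := by
      rw [Finset.ssubset_iff_of_subset]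
      · exact ⟨g i, Finset.mem_filter.mpr ⟨hgiT, hlt⟩, fun hc =>
          lt_irrefl _ (Finset.mem_filter.mp hc).2⟩
      · intro z hz
        rw [Finset.mem_filter] at hz ⊢
        exact ⟨hz.1, lt_trans hz.2 hlt⟩
    have := Finset.card_lt_card hsub
    omega

theorem two_paths_same_values (k h I M δ θ t : ℕ) (a : ℕ → ℤ) (r : ℕ → ℕ)
    (ha : ∀ i j, i < j → j < k → a i < a j)
    (hr : ∀ j < k, 0 < r j)
    (hh2 : 2 ≤ h) (hhk : h ≤ ∑ j ∈ Finset.range k, r j)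
    (hIk : I ≤ k)
    (hI1 : ∑ j ∈ Finset.range I, r j ≤ h)
    (hI2 : ∀ I' ≤ k, (∑ j ∈ Finset.range I', r j ≤ h) → I' ≤ I)
    (hM1 : ∑ j ∈ Finset.Ico (M + 1) k, r j ≤ h)
    (hM2 : ∀ M', (∑ j ∈ Finset.Ico (M' + 1) k, r j ≤ h) → M ≤ M')
    (hδ : (δ : ℤ) = (h : ℤ) - ∑ j ∈ Finset.range I, (r j : ℤ))
    (hθ : (θ : ℤ) = (h : ℤ) - ∑ j ∈ Finset.Ico (M + 1) k, (r j : ℤ))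
    (hcard : ((genSumset k a r h).ncard : ℤ) = Lval k I M r δ θ)
    (P Q : ℕ → ℕ → ℕ) (ht : 1 ≤ t)
    (hP : IsPath k r h t P) (hQ : IsPath k r h t Q)
    (hstart : P 1 = Q 1) (hend : P t = Q t)
    (hne : ∃ i, 1 ≤ i ∧ i ≤ t ∧ P i ≠ Q i) :
    ∀ i, 2 ≤ i → i ≤ t - 1 →
      ∑ j ∈ Finset.range k, (P i j : ℤ) * a j
        = ∑ j ∈ Finset.range k, (Q i j : ℤ) * a j := by
  obtain ⟨hPmem, hPstep⟩ := hP
  obtain ⟨hQmem, hQstep⟩ := hQ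
  have hh1 : 1 ≤ h := by omega
  have hminlem : ∀ x, InR k r h x →
      ¬ (∃ j, j + 1 < k ∧ 1 ≤ x (j+1) ∧ x j < r j) →
      Sw k x = (∑ j ∈ Finset.range I, (j : ℤ) * r j) + I * δ :=
    fun x hx hnb => Sw_noback k h I δ r hr hIk hI1 hI2 hδ hh1 x hx hnb
  have hmaxlem : ∀ x, InR k r h x →
      ¬ (∃ j, j + 1 < k ∧ 1 ≤ x j ∧ x (j+1) < r (j+1)) →
      Sw k x = (∑ j ∈ Finset.Ico (M + 1) k, (j : ℤ) * r j) + M * θ :=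
    fun x hx hnf => Sw_nofwd k h M θ r hr hM1 hM2 hθ hh1 x hx hnf
  obtain ⟨n₁, B, hBn, hBmem, hBstep, hB0⟩ :=
    chain_back k h r _ hminlem (Sw k (P 1)).toNat (P 1) (hPmem 1 le_rfl ht) le_rfl
  obtain ⟨n₂, F, hF0, hFmem, hFstep, hFn⟩ :=
    chain_fwd k h r _ hmaxlem
      ((∑ j ∈ Finset.range k, (j : ℤ) * r j) - Sw k (P t)).toNat (P t)
      (hPmem t ht le_rfl) le_rfl
  have htt : t = (t - 1) + 1 := by omega
  obtain ⟨N, hN⟩ : ∃ N, N = n₁ + (t - 1) + n₂ := ⟨_, rfl⟩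
  -- generic construction of the extended chain
  have build : ∀ Pp : ℕ → ℕ → ℕ, (∀ i, 1 ≤ i → i ≤ t → InR k r h (Pp i)) →
      (∀ i, 1 ≤ i → i < t → IsStep k (Pp i) (Pp (i+1))) → Pp 1 = P 1 → Pp t = P t →
      ∃ Z : ℕ → ℕ → ℕ, (∀ s ≤ N, InR k r h (Z s)) ∧
        (∀ s < N, IsStep k (Z s) (Z (s+1))) ∧
        (∀ i, 1 ≤ i → i ≤ t → Z (n₁ + i - 1) = Pp i) ∧ Z 0 = B 0 ∧ Z N = F n₂ := by
    intro Pp hmem hstep hs he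
    refine ⟨fun s => if s ≤ n₁ then B s else if s ≤ n₁ + (t - 1) then Pp (s - n₁ + 1)
      else F (s - (n₁ + (t - 1))), ?_, ?_, ?_, ?_, ?_⟩
    · intro s hsN
      simp only
      by_cases c1 : s ≤ n₁
      · rw [if_pos c1]; exact hBmem s c1
      · rw [if_neg c1]
        by_cases c2 : s ≤ n₁ + (t - 1)
        · rw [if_pos c2]; exact hmem _ (by omega) (by omega)
        · rw [if_neg c2]; exact hFmem _ (by omega)
    · intro s hsN
      simp only
      by_cases c1 : s + 1 ≤ n₁
      · rw [if_pos (by omega : s ≤ n₁), if_pos c1]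
        exact hBstep s (by omega)
      · by_cases c2 : s = n₁
        · by_cases c3 : 1 ≤ (t - 1)
          · rw [if_pos (by omega : s ≤ n₁), if_neg c1, if_pos (by omega : s + 1 ≤ n₁ + (t - 1))]
            rw [show s + 1 - n₁ + 1 = 2 by omega, c2, hBn, ← hs]
            exact hstep 1 le_rfl (by omega)
          · rw [if_pos (by omega : s ≤ n₁), if_neg c1,
              if_neg (by omega : ¬ (s + 1 ≤ n₁ + (t - 1)))]
            rw [show s + 1 - (n₁ + (t - 1)) = 1 by omega, c2, hBn]
            rw [show P 1 = P t by rw [show t = 1 by omega], ← hF0]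
            exact hFstep 0 (by omega)
        · by_cases c4 : s + 1 ≤ n₁ + (t - 1)
          · rw [if_neg (by omega : ¬ (s ≤ n₁)), if_pos (by omega : s ≤ n₁ + (t - 1)),
              if_neg c1, if_pos c4]
            rw [show s + 1 - n₁ + 1 = (s - n₁ + 1) + 1 by omega]
            exact hstep (s - n₁ + 1) (by omega) (by omega)
          · by_cases c5 : s ≤ n₁ + (t - 1)
            · -- s = n₁ + (t - 1), (t - 1) ≥ 1
              rw [if_neg (by omega : ¬ (s ≤ n₁)), if_pos c5, if_neg c1, if_neg c4]
              rw [show s - n₁ + 1 = t by omega, show s + 1 - (n₁ + (t - 1)) = 1 by omega,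
                he, ← hF0]
              exact hFstep 0 (by omega)
            · rw [if_neg (by omega : ¬ (s ≤ n₁)), if_neg c5, if_neg c1, if_neg c4]
              rw [show s + 1 - (n₁ + (t - 1)) = (s - (n₁ + (t - 1))) + 1 by omega]
              exact hFstep (s - (n₁ + (t - 1))) (by omega)
    · intro i hi1 hit
      simp only
      by_cases c1 : i = 1
      · rw [if_pos (by omega : n₁ + i - 1 ≤ n₁), show n₁ + i - 1 = n₁ by omega, hBn, c1, hs]
      · rw [if_neg (by omega : ¬ (n₁ + i - 1 ≤ n₁)),
          if_pos (by omega : n₁ + i - 1 ≤ n₁ + (t - 1)),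
          show n₁ + i - 1 - n₁ + 1 = i by omega]
    · simp only [if_pos (by omega : 0 ≤ n₁)]
    · simp only
      by_cases c1 : 1 ≤ n₂
      · rw [if_neg (by omega : ¬ (N ≤ n₁)), if_neg (by omega : ¬ (N ≤ n₁ + (t - 1))),
          show N - (n₁ + (t - 1)) = n₂ by omega]
      · by_cases c2 : 1 ≤ (t - 1)
        · rw [if_neg (by omega : ¬ (N ≤ n₁)), if_pos (by omega : N ≤ n₁ + (t - 1)),
            show N - n₁ + 1 = t by omega, he, ← hF0, show n₂ = 0 by omega]
        · rw [if_pos (by omega : N ≤ n₁), show N = n₁ by omega, hBn,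
            show P 1 = P t by rw [show t = 1 by omega], ← hF0, show n₂ = 0 by omega]
  obtain ⟨ZP, hZPmem, hZPstep, hZPval, hZP0, hZPN⟩ :=
    build P hPmem hPstep rfl rfl
  obtain ⟨ZQ, hZQmem, hZQstep, hZQval, hZQ0, hZQN⟩ :=
    build Q hQmem hQstep hstart.symm hend.symm
  -- strict monotonicity of φ along any chain
  have mono : ∀ Z : ℕ → ℕ → ℕ, (∀ s < N, IsStep k (Z s) (Z (s+1))) →
      ∀ p q, p < q → q ≤ N →
      ∑ j ∈ Finset.range k, (Z p j : ℤ) * a j < ∑ j ∈ Finset.range k, (Z q j : ℤ) * a j := by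
    intro Z hZ p q
    induction q with
    | zero => intro h1 _; omega
    | succ q ih =>
      intro h1 h2
      have hq := step_phi k a ha (Z q) (Z (q+1)) (hZ q (by omega))
      rcases Nat.lt_or_ge p q with hl | hl
      · exact lt_trans (ih hl (by omega)) hq
      · rw [show p = q by omega]
        exact hq
  -- Sw values along the P-chain
  have hSwZ : ∀ s ≤ N, Sw k (ZP s) =
      ((∑ j ∈ Finset.range I, (j : ℤ) * r j) + I * δ) + s := by
    intro s
    induction s with
    | zero => intro _; rw [hZP0, hB0]; simp
    | succ s ih =>
      intro hs
      rw [step_Sw k (ZP s) (ZP (s+1)) (hZPstep s (by omega)), ih (by omega)]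
      push_cast; ring
  have hNval : (N : ℤ) = Lval k I M r δ θ - 1 := by
    have e1 := hSwZ N le_rfl
    rw [hZPN, hFn] at e1
    unfold Lval
    linarith
  -- the images
  have himg_card : ∀ Z : ℕ → ℕ → ℕ, (∀ s < N, IsStep k (Z s) (Z (s+1))) →
      ((Finset.range (N+1)).image (fun s => ∑ j ∈ Finset.range k, (Z s j : ℤ) * a j)).card
        = N + 1 := by
    intro Z hZ
    rw [Finset.card_image_of_injOn, Finset.card_range]
    intro p hp q hq hpq
    simp only [Finset.coe_range, Set.mem_Iio] at hp hq
    by_contra hne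
    have hpq' : ∑ j ∈ Finset.range k, (Z p j : ℤ) * a j
        = ∑ j ∈ Finset.range k, (Z q j : ℤ) * a j := hpq
    rcases Nat.lt_or_ge p q with hl | hl
    · exact absurd (mono Z hZ p q hl (by omega)) (by rw [hpq']; exact lt_irrefl _)
    · have hl2 : q < p := by omega
      exact absurd (mono Z hZ q p hl2 (by omega)) (by rw [hpq'.symm]; exact lt_irrefl _)
  have himg_sub : ∀ Z : ℕ → ℕ → ℕ, (∀ s ≤ N, InR k r h (Z s)) →
      ↑((Finset.range (N+1)).image (fun s => ∑ j ∈ Finset.range k, (Z s j : ℤ) * a j))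
        ⊆ genSumset k a r h := by
    intro Z hZ z hz
    simp only [Finset.coe_image, Finset.coe_range, Set.mem_image, Set.mem_Iio] at hz
    obtain ⟨s, hs, rfl⟩ := hz
    obtain ⟨hz1, _, hz3⟩ := hZ s (by omega)
    exact ⟨Z s, hz1, hz3, rfl⟩
  have hncard : (genSumset k a r h).ncard = N + 1 := by
    have : ((genSumset k a r h).ncard : ℤ) = (N : ℤ) + 1 := by rw [hcard]; omega
    exact_mod_cast this
  have hfin : (genSumset k a r h).Finite := by
    by_contra hinf
    have hinf' : (genSumset k a r h).Infinite := hinf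
    rw [Set.Infinite.ncard hinf'] at hncard
    omega
  have himg_eq : ∀ Z : ℕ → ℕ → ℕ, (∀ s ≤ N, InR k r h (Z s)) →
      (∀ s < N, IsStep k (Z s) (Z (s+1))) →
      ↑((Finset.range (N+1)).image (fun s => ∑ j ∈ Finset.range k, (Z s j : ℤ) * a j))
        = genSumset k a r h := by
    intro Z hZm hZs
    refine Set.eq_of_subset_of_ncard_le (himg_sub Z hZm) ?_ hfin
    rw [Set.ncard_coe_finset, himg_card Z hZs, hncard]
  have himg : (Finset.range (N+1)).image (fun s => ∑ j ∈ Finset.range k, (ZP s j : ℤ) * a j)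
      = (Finset.range (N+1)).image (fun s => ∑ j ∈ Finset.range k, (ZQ s j : ℤ) * a j) := by
    apply Finset.coe_injective
    rw [himg_eq ZP hZPmem hZPstep, himg_eq ZQ hZQmem hZQstep]
  have hval := mono_enum_eq (N+1)
    (fun s => ∑ j ∈ Finset.range k, (ZP s j : ℤ) * a j)
    (fun s => ∑ j ∈ Finset.range k, (ZQ s j : ℤ) * a j)
    (fun p q hpq hq => mono ZP hZPstep p q hpq (by omega))
    (fun p q hpq hq => mono ZQ hZQstep p q hpq (by omega))
    himg
  intro i hi2 hit
  have hi_le : i ≤ t := by omega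
  have hs := hval (n₁ + i - 1) (by omega)
  rw [hZPval i (by omega) hi_le, hZQval i (by omega) hi_le] at hs
  exact hs
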